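/- arXiv:math/0408348 — 4 statements merged into one kernel-verified Lean document; each statement's English description precedes it below -/
import Mathlib

section
/- In a finite lattice L whose set of atoms A(L) is independent (i.e., for every proper subset B of A(L), the join of B is strictly less than the join of A(L)), the Möbius function from the minimum element satisfies: M(x) = (-1)^|B| if x is the join of some subset B of atoms, and M(x) = 0 otherwise. -/
open Classical

open Classical in
/-- The candidate Möbius function: `(-1)^|B|` on joins of sets `B` of atoms, `0` elsewhere. -/
noncomputable def sagF {α : Type*} [Lattice α] [BoundedOrder α] (x : α) : ℤ :=
  if h : ∃ B : Finset α, (∀ a ∈ B, IsAtom a) ∧ x = B.sup id then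
    (-1) ^ h.choose.card else 0

section SagAux

variable {α : Type*} [Fintype α] [Lattice α] [BoundedOrder α]

lemma sag_notle
    (hInd : ∀ B : Finset α, B ⊂ Finset.univ.filter (fun a => IsAtom a) →
      B.sup id < (Finset.univ.filter (fun a => IsAtom a)).sup id)
    {a : α} (ha : IsAtom a) :
    ¬ a ≤ ((Finset.univ.filter (fun a => IsAtom a)).erase a).sup id := by
  classical
  intro hle
  set A := Finset.univ.filter (fun a : α => IsAtom a) with hA
  have haA : a ∈ A := by simp [hA, ha]
  have hss : A.erase a ⊂ A := Finset.erase_ssubset haA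
  have hlt := hInd _ hss
  have hge : A.sup id ≤ (A.erase a).sup id := by
    refine Finset.sup_le fun b hb => ?_
    rcases eq_or_ne b a with rfl | hba
    · exact hle
    · exact Finset.le_sup (Finset.mem_erase.mpr ⟨hba, hb⟩)
  exact absurd (lt_of_lt_of_le hlt hge) (lt_irrefl _)

lemma sag_inj
    (hInd : ∀ B : Finset α, B ⊂ Finset.univ.filter (fun a => IsAtom a) →
      B.sup id < (Finset.univ.filter (fun a => IsAtom a)).sup id)
    {B C : Finset α} (hB : ∀ a ∈ B, IsAtom a) (hC : ∀ a ∈ C, IsAtom a)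
    (h : B.sup id = C.sup id) : B = C := by
  classical
  have key : ∀ {B C : Finset α}, (∀ a ∈ B, IsAtom a) → (∀ a ∈ C, IsAtom a) →
      B.sup id = C.sup id → B ⊆ C := by
    intro B C hB hC h a haB
    by_contra haC
    have ha := hB a haB
    have h1 : a ≤ C.sup id := h ▸ Finset.le_sup (f := id) haB
    have h2 : C ⊆ (Finset.univ.filter (fun a => IsAtom a)).erase a := fun b hb =>
      Finset.mem_erase.mpr ⟨fun hba => haC (hba ▸ hb), by simp [hC b hb]⟩
    exact sag_notle hInd ha (h1.trans (Finset.sup_mono h2))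
  exact subset_antisymm (key hB hC h) (key hC hB h.symm)

lemma sagF_eq
    (hInd : ∀ B : Finset α, B ⊂ Finset.univ.filter (fun a => IsAtom a) →
      B.sup id < (Finset.univ.filter (fun a => IsAtom a)).sup id)
    {x : α} {B : Finset α} (hB : ∀ a ∈ B, IsAtom a)
    (hx : x = B.sup id) : sagF x = (-1) ^ B.card := by
  have h : ∃ B : Finset α, (∀ a ∈ B, IsAtom a) ∧ x = B.sup id := ⟨B, hB, hx⟩
  rw [sagF, dif_pos h]
  obtain ⟨h1, h2⟩ := h.choose_spec
  rw [sag_inj hInd h1 hB (h2.symm.trans hx)]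

lemma sagF_eq_zero {x : α}
    (h : ¬ ∃ B : Finset α, (∀ a ∈ B, IsAtom a) ∧ x = B.sup id) : sagF x = 0 := by
  rw [sagF, dif_neg h]

lemma sagF_rec
    (hInd : ∀ B : Finset α, B ⊂ Finset.univ.filter (fun a => IsAtom a) →
      B.sup id < (Finset.univ.filter (fun a => IsAtom a)).sup id)
    {x : α} (hx : x ≠ ⊥) :
    ∑ y ∈ Finset.univ.filter (fun y => y ≤ x), sagF y = 0 := by
  classical
  set Ax : Finset α := Finset.univ.filter (fun a => IsAtom a ∧ a ≤ x) with hAx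
  set T : Finset α := Ax.powerset.image (fun B => B.sup id) with hT
  have hsub : T ⊆ Finset.univ.filter (fun y => y ≤ x) := by
    intro y hy
    rw [hT, Finset.mem_image] at hy
    obtain ⟨B, hB, rfl⟩ := hy
    rw [Finset.mem_powerset] at hB
    simp only [Finset.mem_filter, Finset.mem_univ, true_and]
    exact Finset.sup_le fun a ha => by
      have := Finset.mem_filter.mp (hB ha)
      exact this.2.2
  have h1 : ∑ y ∈ Finset.univ.filter (fun y => y ≤ x), sagF y = ∑ y ∈ T, sagF y := by
    refine (Finset.sum_subset hsub fun y hy hyT => ?_).symm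
    by_contra h0
    have hex : ∃ B : Finset α, (∀ a ∈ B, IsAtom a) ∧ y = B.sup id := by
      by_contra hne
      exact h0 (sagF_eq_zero hne)
    obtain ⟨B, hB, rfl⟩ := hex
    apply hyT
    rw [hT, Finset.mem_image]
    refine ⟨B, Finset.mem_powerset.mpr fun a ha => ?_, rfl⟩
    have hax : a ≤ x := le_trans (Finset.le_sup (f := id) ha) ((Finset.mem_filter.mp hy).2)
    simp [hAx, hB a ha, hax]
  have h2 : ∑ y ∈ T, sagF y = ∑ B ∈ Ax.powerset, sagF (B.sup id) := by
    rw [hT]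
    refine Finset.sum_image ?_
    intro B hB C hC h
    rw [Finset.mem_coe, Finset.mem_powerset] at hB hC
    exact sag_inj hInd (fun a ha => ((Finset.mem_filter.mp (hB ha)).2).1)
      (fun a ha => ((Finset.mem_filter.mp (hC ha)).2).1) h
  have h3 : ∀ B ∈ Ax.powerset, sagF (B.sup id) = (-1 : ℤ) ^ B.card := fun B hB =>
    sagF_eq hInd (fun a ha => ((Finset.mem_filter.mp (Finset.mem_powerset.mp hB ha)).2).1) rfl
  have hne : Ax.Nonempty := by
    obtain ⟨a, ha, hax⟩ := (eq_bot_or_exists_atom_le x).resolve_left hx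
    exact ⟨a, by simp [hAx, ha, hax]⟩
  rw [h1, h2, Finset.sum_congr rfl h3,
    Finset.sum_powerset_neg_one_pow_card_of_nonempty hne]

end SagAux

open Classical in
/-- Sagan's theorem: in a finite lattice whose set of atoms is independent, the
Möbius function from the bottom element is (-1)^|B| on joins of sets B of atoms and
0 elsewhere.  Here `M` is the Möbius function μ(⊥, ·), characterized by M ⊥ = 1 and
∑_{y ≤ x} M y = 0 for x ≠ ⊥. -/
theorem stmt3 {α : Type*} [Fintype α] [Lattice α] [BoundedOrder α]
    (hInd : ∀ B : Finset α, B ⊂ Finset.univ.filter (fun a => IsAtom a) →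
      B.sup id < (Finset.univ.filter (fun a => IsAtom a)).sup id)
    (M : α → ℤ) (hM1 : M ⊥ = 1)
    (hMrec : ∀ x : α, x ≠ ⊥ → ∑ y ∈ Finset.univ.filter (fun y => y ≤ x), M y = 0)
    (x : α) :
    (∀ B : Finset α, (∀ a ∈ B, IsAtom a) → x = B.sup id → M x = (-1) ^ B.card) ∧
    ((¬ ∃ B : Finset α, (∀ a ∈ B, IsAtom a) ∧ x = B.sup id) → M x = 0) := by
  classical
  have key : ∀ x : α, M x = sagF x := by
    intro x
    refine wellFounded_lt.induction (C := fun x => M x = sagF x) x ?_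
    intro x ih
    rcases eq_or_ne x ⊥ with rfl | hx
    · rw [hM1, sagF_eq hInd (B := (∅ : Finset α)) (by simp) (by simp)]
      simp
    · have hsplit : Finset.univ.filter (fun y => y ≤ x) =
          insert x (Finset.univ.filter (fun y => y < x)) := by
        ext y
        simp only [Finset.mem_insert, Finset.mem_filter, Finset.mem_univ, true_and]
        constructor
        · intro h
          rcases eq_or_lt_of_le h with h | h
          · exact Or.inl h
          · exact Or.inr h
        · rintro (rfl | h)
          · exact le_refl _
          · exact h.le
      have hnx : x ∉ Finset.univ.filter (fun y => y < x) := by simp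
      have hM := hMrec x hx
      have hF := sagF_rec hInd hx
      rw [hsplit, Finset.sum_insert hnx] at hM hF
      have hsum : ∑ y ∈ Finset.univ.filter (fun y => y < x), M y
          = ∑ y ∈ Finset.univ.filter (fun y => y < x), sagF y :=
        Finset.sum_congr rfl (fun y hy => ih y (Finset.mem_filter.mp hy).2)
      rw [hsum] at hM
      linarith
  constructor
  · intro B hB hx2
    rw [key x, sagF_eq hInd hB hx2]
  · intro h
    rw [key x, sagF_eq_zero h]
end

section
/- The operations 'over' and 'under' on tree names, defined by v̄ ↗ w̄ = (v̄, n ▷ w̄) and v̄ ↖ w̄ = (v̄, n + w̄) where n is the length of v̄ and (k ▷ w̄)_i = k + w_i if w_i ≠ 1 and 1 if w_i = 1, are both associative and satisfy the L-algebra axiom (u ↗ v) ↖ w = u ↗ (v ↖ w). -/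
/-- Planar rooted binary trees. -/
inductive PB : Type
  | leaf : PB
  | node : PB → PB → PB
  deriving DecidableEq

namespace PB

/-- The name (vector encoding) of a planar binary tree. -/
def name : PB → List ℕ
  | leaf => []
  | node l r => name l ++ [1] ++ (name r).map (fun x => x + (name l).length + 1)

/-- Number of internal (trivalent) vertices. -/
def nodes : PB → ℕ
  | leaf => 0
  | node l r => nodes l + nodes r + 1

/-- Mirror image of a tree. -/
def mirror : PB → PB
  | leaf => leaf
  | node l r => node (mirror r) (mirror l)

/-- Left subtree. -/
def left : PB → PB
  | leaf => leaf
  | node l _ => l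

/-- Right subtree. -/
def right : PB → PB
  | leaf => leaf
  | node _ r => r

end PB

/-- Grafting on vectors: v ∨ w = (v, 1, w + (len v + 1)). -/
def graft (v w : List ℕ) : List ℕ := v ++ [1] ++ w.map (fun x => x + v.length + 1)

/-- A list is a tree name if it is the name of some planar binary tree. -/
def TreeName (v : List ℕ) : Prop := ∃ t : PB, PB.name t = v

/-- Componentwise order on vectors (of the same length). -/
def vle (v w : List ℕ) : Prop := List.Forall₂ (· ≤ ·) v w

/-- Strict componentwise order. -/
def vlt (v w : List ℕ) : Prop := vle v w ∧ v ≠ w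

/-- k ▷ w : shift all coordinates ≠ 1 by k, fix coordinates equal to 1. -/
def rsh (k : ℕ) (w : List ℕ) : List ℕ := w.map (fun x => if x = 1 then 1 else x + k)

/-- The over operation on tree names: v ↗ w = (v, len v ▷ w). -/
def overOp (v w : List ℕ) : List ℕ := v ++ rsh v.length w

/-- The under operation on tree names: v ↖ w = (v, len v + w). -/
def under (v w : List ℕ) : List ℕ := v ++ w.map (fun x => x + v.length)

/-- Componentwise interval of lists. -/
def listIcc : List ℕ → List ℕ → Finset (List ℕ)
  | a :: as, b :: bs => ((Finset.Icc a b) ×ˢ listIcc as bs).image fun p => p.1 :: p.2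
  | _, _ => {[]}

open Classical in
/-- Componentwise interval of tree names. -/
noncomputable def treeIcc (a b : List ℕ) : Finset (List ℕ) :=
  (listIcc a b).filter TreeName

/-- Dendriform addition of tree names: all tree names t with v ↗ w ≤ t ≤ v ↖ w. -/
noncomputable def dplus (v w : List ℕ) : Finset (List ℕ) :=
  treeIcc (overOp v w) (under v w)


lemma name_pos : ∀ t : PB, ∀ x ∈ PB.name t, 1 ≤ x := by
  intro t
  induction t with
  | leaf => simp [PB.name]
  | node l r ihl ihr =>
    intro x hx
    simp only [PB.name, List.mem_append, List.mem_map, List.mem_singleton] at hx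
    rcases hx with (hx | hx) | ⟨y, hy, rfl⟩
    · exact ihl x hx
    · omega
    · have := ihr y hy; omega

/-- The over and under operations are associative and satisfy the associative
L-algebra axiom (u ↗ v) ↖ w = u ↗ (v ↖ w). -/
theorem stmt6 (u v w : List ℕ) (hu : TreeName u) (hv : TreeName v) (hw : TreeName w)
    (hu0 : u ≠ []) (hv0 : v ≠ []) (hw0 : w ≠ []) :
    overOp (overOp u v) w = overOp u (overOp v w) ∧
    under (under u v) w = under u (under v w) ∧
    under (overOp u v) w = overOp u (under v w) := by
  obtain ⟨tv, rfl⟩ := hv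
  obtain ⟨tw, rfl⟩ := hw
  have hvpos := name_pos tv
  have hwpos := name_pos tw
  have hvlen : 1 ≤ (PB.name tv).length := List.length_pos_iff.mpr hv0
  refine ⟨?_, ?_, ?_⟩
  · simp only [overOp, rsh, List.map_append, List.map_map, List.append_assoc,
      List.length_append, List.length_map]
    congr 1
    congr 1
    apply List.map_congr_left
    intro x hx
    have h1 := hwpos x hx
    simp only [Function.comp_apply]
    rcases eq_or_ne x 1 with rfl | h
    · simp
    · have h2 : x + (PB.name tv).length ≠ 1 := by omega
      simp only [if_neg h, if_neg h2]
      omega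
  · simp only [under, List.length_append, List.length_map, List.map_append,
      List.map_map, List.append_assoc]
    congr 1
    congr 1
    apply List.map_congr_left
    intro x _
    simp only [Function.comp_apply]
    omega
  · simp only [overOp, under, rsh, List.length_append, List.length_map,
      List.map_append, List.map_map, List.append_assoc]
    congr 1
    congr 1
    apply List.map_congr_left
    intro x hx
    have h1 := hwpos x hx
    have h2 : x + (PB.name tv).length ≠ 1 := by omega
    simp only [Function.comp_apply, if_neg h2]
    omega
end

section
/- For any tree name w̄ ∈ N^{n+m}, there exist unique tree names ū ∈ N^n and v̄ ∈ N^m such that ū ↗ v̄ ≤ w̄ ≤ ū ↖ v̄ (componentwise). -/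
open PB

lemma one_le_of_mem_name : ∀ (t : PB), ∀ x ∈ t.name, 1 ≤ x := by
  intro t
  induction t with
  | leaf => simp [PB.name]
  | node l r ihl ihr =>
    intro x hx
    simp only [PB.name, List.mem_append, List.mem_map, List.mem_singleton] at hx
    rcases hx with (hx | rfl) | ⟨y, hy, rfl⟩
    · exact ihl x hx
    · exact le_refl 1
    · have := ihr y hy; omega

def takeT : PB → ℕ → PB
  | .leaf, _ => .leaf
  | .node l r, n => if n ≤ (PB.name l).length then takeT l n
      else .node l (takeT r (n - (PB.name l).length - 1))

def dropT : PB → ℕ → PB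
  | .leaf, _ => .leaf
  | .node l r, n => if n ≤ (PB.name l).length then .node (dropT l n) r
      else dropT r (n - (PB.name l).length - 1)

lemma name_takeT : ∀ (t : PB) (n : ℕ), (takeT t n).name = t.name.take n := by
  intro t
  induction t with
  | leaf => intro n; simp [takeT, PB.name]
  | node l r ihl ihr =>
    intro n
    rw [takeT]
    set a := (PB.name l).length with ha
    by_cases h : n ≤ a
    · rw [if_pos h, ihl, PB.name, List.take_append_of_le_length (by simp [← ha]; omega),
        List.take_append_of_le_length (by omega)]
    · rw [if_neg h, PB.name, PB.name, List.take_append,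
        List.take_of_length_le (by simp [← ha]; omega), ← List.map_take, ihr]
      congr 3
      simp [← ha]
      omega

lemma name_dropT : ∀ (t : PB) (n : ℕ),
    (dropT t n).name = (t.name.drop n).map (fun x => max 1 (x - n)) := by
  intro t
  induction t with
  | leaf => intro n; simp [dropT, PB.name]
  | node l r ihl ihr =>
    intro n
    rw [dropT]
    set a := (PB.name l).length with ha
    by_cases h : n ≤ a
    · rw [if_pos h, PB.name, PB.name, ihl,
        List.drop_append_of_le_length (by simp [← ha]; omega),
        List.drop_append_of_le_length (by omega),
        List.map_append, List.map_append, List.map_map]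
      have hlen : ((PB.name l).drop n).length = a - n := by simp [← ha]
      congr 1
      · congr 1
        simp only [List.map_cons, List.map_nil]
        congr 1
        omega
      · apply List.map_congr_left
        intro x hx
        have := one_le_of_mem_name r x hx
        simp only [Function.comp, List.length_map, hlen]
        omega
    · rw [if_neg h, ihr, PB.name]
      have h1 : ((PB.name l) ++ [1]).length ≤ n := by simp [← ha]; omega
      rw [List.drop_append, List.drop_eq_nil_of_le h1, List.nil_append,
        ← List.map_drop, List.map_map]
      simp only [List.length_append, List.length_singleton, ← ha]
      rw [← Nat.sub_sub]
      apply List.map_congr_left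
      intro x hx
      have := one_le_of_mem_name r x (List.mem_of_mem_drop hx)
      simp only [Function.comp, ← ha]
      omega

lemma vle_getElem {v w : List ℕ} (h : vle v w) (i : ℕ) (h1 : i < v.length)
    (h2 : i < w.length) : v[i] ≤ w[i] := by
  have h' : List.Forall₂ (· ≤ ·) v w := h
  simpa using (List.forall₂_iff_get.mp h').2 i h1 h2

/-- For any tree name w of degree n + m there exist unique tree names u of degree n
and v of degree m with u ↗ v ≤ w ≤ u ↖ v. -/
theorem stmt10 (n m : ℕ) (hn : 0 < n) (hm : 0 < m) (w : List ℕ)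
    (hw : TreeName w) (hl : w.length = n + m) :
    ∃! p : List ℕ × List ℕ, TreeName p.1 ∧ TreeName p.2 ∧
      p.1.length = n ∧ p.2.length = m ∧ vle (overOp p.1 p.2) w ∧ vle w (under p.1 p.2) := by
  obtain ⟨t, rfl⟩ := hw
  have hpos : ∀ x ∈ t.name, 1 ≤ x := one_le_of_mem_name t
  have hul : (t.name.take n).length = n := by rw [List.length_take, hl]; omega
  refine ⟨(t.name.take n, (t.name.drop n).map (fun x => max 1 (x - n))),
    ⟨⟨takeT t n, name_takeT t n⟩, ⟨dropT t n, name_dropT t n⟩, hul, ?_, ?_, ?_⟩, ?_⟩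
  · rw [List.length_map, List.length_drop, hl]; omega
  · show List.Forall₂ (· ≤ ·) _ _
    rw [overOp, hul]
    conv_rhs => rw [← List.take_append_drop n t.name]
    apply List.rel_append (List.forall₂_refl _)
    rw [rsh, List.map_map]
    refine List.forall₂_map_left_iff.mpr (List.forall₂_same.mpr ?_)
    intro x hx
    have := hpos x (List.mem_of_mem_drop hx)
    simp only [Function.comp]
    split_ifs <;> omega
  · show List.Forall₂ (· ≤ ·) _ _
    rw [under, hul]
    conv_lhs => rw [← List.take_append_drop n t.name]
    apply List.rel_append (List.forall₂_refl _)
    rw [List.map_map]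
    refine List.forall₂_map_right_iff.mpr (List.forall₂_same.mpr ?_)
    intro x hx
    have := hpos x (List.mem_of_mem_drop hx)
    simp only [Function.comp]
    omega
  · rintro ⟨q1, q2⟩ ⟨⟨t1, ht1⟩, ⟨t2, ht2⟩, hq1, hq2, ho, hu2⟩
    dsimp only at ht1 ht2 hq1 hq2 ho hu2 ⊢
    have hq2pos : ∀ x ∈ q2, 1 ≤ x := by rw [← ht2]; exact one_le_of_mem_name t2
    rw [overOp, hq1] at ho
    rw [under, hq1] at hu2
    have hrshlen : (rsh n q2).length = m := by rw [rsh, List.length_map, hq2]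
    have h1 : q1 = t.name.take n := by
      apply List.ext_getElem (by rw [hq1, hul])
      intro i hi hi'
      have hin : i < n := hq1 ▸ hi
      have hiw : i < t.name.length := by omega
      have hlow := vle_getElem ho i (by rw [List.length_append, hq1, hrshlen]; omega) hiw
      have hhigh := vle_getElem hu2 i hiw
        (by rw [List.length_append, hq1, List.length_map, hq2]; omega)
      rw [List.getElem_append_left hi] at hlow hhigh
      rw [List.getElem_take]
      omega
    have h2 : q2 = (t.name.drop n).map (fun x => max 1 (x - n)) := by
      apply List.ext_getElem (by rw [hq2, List.length_map, List.length_drop, hl]; omega)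
      intro j hj hj'
      have hjm : j < m := hq2 ▸ hj
      have hw2 : n + j < t.name.length := by omega
      have hlow := vle_getElem ho (n + j) (by rw [List.length_append, hq1, hrshlen]; omega) hw2
      have hhigh := vle_getElem hu2 (n + j) hw2
        (by rw [List.length_append, hq1, List.length_map, hq2]; omega)
      rw [List.getElem_append_right (by rw [hq1]; omega)] at hlow
      rw [List.getElem_append_right (by rw [hq1]; omega)] at hhigh
      simp only [rsh, List.getElem_map, hq1, Nat.add_sub_cancel_left] at hlow hhigh
      have hj1 := hq2pos q2[j] (List.getElem_mem _)
      rw [List.getElem_map, List.getElem_drop]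
      split_ifs at hlow <;> omega
    simp only [Prod.mk.injEq]
    exact ⟨h1, h2⟩
end

section
/- Dendriform addition satisfies left and right cancellation: for tree names ū, and v̄, w̄ of equal degree, ū ∔ v̄ = ū ∔ w̄ implies v̄ = w̄, and v̄ ∔ ū = w̄ ∔ ū implies v̄ = w̄. -/
/-- Graft `v` onto the rightmost leaf of `w`. -/
def graftR : PB → PB → PB
  | .leaf, v => v
  | .node l r, v => .node l (graftR r v)

lemma name_graftR (w v : PB) : (graftR w v).name = under w.name v.name := by
  induction w generalizing v with
  | leaf => simp [graftR, under, PB.name]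
  | node l r ihl ihr =>
    simp only [graftR, PB.name, under, ihr, List.map_append, List.map_map,
      List.length_append, List.length_map, List.length_cons, List.length_singleton,
      List.append_assoc]
    congr 2
    · congr 1
      exact List.map_congr_left fun x _ => by
        simp only [Function.comp_apply, List.length_nil]
        omega

lemma treeName_under {u v : List ℕ} (hu : TreeName u) (hv : TreeName v) :
    TreeName (under u v) := by
  obtain ⟨s, rfl⟩ := hu
  obtain ⟨t, rfl⟩ := hv
  exact ⟨graftR s t, name_graftR s t⟩

lemma vle_refl (v : List ℕ) : vle v v := List.forall₂_same.mpr (fun _ _ => le_refl _)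

lemma vle_antisymm : ∀ {v w : List ℕ}, vle v w → vle w v → v = w := by
  intro v w h1 h2
  induction h1 with
  | nil => rfl
  | cons hab h ih =>
    rcases h2 with _ | ⟨hba, h2'⟩
    rw [Nat.le_antisymm hab hba, ih h2']

lemma vle_rsh (k : ℕ) (w : List ℕ) : vle (rsh k w) (w.map (fun x => x + k)) := by
  induction w with
  | nil => exact List.Forall₂.nil
  | cons a as ih =>
    refine List.Forall₂.cons ?_ ih
    by_cases h : a = 1 <;> simp [rsh, h]

lemma vle_over_under (v w : List ℕ) : vle (overOp v w) (under v w) :=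
  List.rel_append (vle_refl v) (vle_rsh v.length w)

lemma mem_listIcc : ∀ (a b x : List ℕ), a.length = b.length →
    (x ∈ listIcc a b ↔ vle a x ∧ vle x b) := by
  intro a
  induction a with
  | nil =>
    intro b x h
    rw [List.length_nil] at h
    obtain rfl : b = [] := List.eq_nil_of_length_eq_zero h.symm
    simp only [listIcc, Finset.mem_singleton]
    constructor
    · rintro rfl; exact ⟨List.Forall₂.nil, List.Forall₂.nil⟩
    · rintro ⟨h1, h2⟩; cases h1; rfl
  | cons a as ih =>
    intro b x h
    cases b with
    | nil => simp at h
    | cons b bs =>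
      simp only [listIcc, Finset.mem_image, Finset.mem_product, Finset.mem_Icc] at *
      constructor
      · rintro ⟨⟨c, cs⟩, ⟨⟨h1, h2⟩, h3⟩, rfl⟩
        have := (ih bs cs (by simpa using h)).mp h3
        exact ⟨List.Forall₂.cons h1 this.1, List.Forall₂.cons h2 this.2⟩
      · rintro ⟨h1, h2⟩
        cases x with
        | nil => cases h1
        | cons c cs =>
          rcases h1 with _ | ⟨h1a, h1b⟩
          rcases h2 with _ | ⟨h2a, h2b⟩
          exact ⟨(c, cs), ⟨⟨h1a, h2a⟩, (ih bs cs (by simpa using h)).mpr ⟨h1b, h2b⟩⟩, rfl⟩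

lemma len_over (v w : List ℕ) : (overOp v w).length = v.length + w.length := by
  simp [overOp, rsh]

lemma len_under (v w : List ℕ) : (under v w).length = v.length + w.length := by
  simp [under]

lemma under_mem_dplus {v w : List ℕ} (hv : TreeName v) (hw : TreeName w) :
    under v w ∈ dplus v w := by
  classical
  rw [dplus, treeIcc, Finset.mem_filter]
  refine ⟨?_, treeName_under hv hw⟩
  rw [mem_listIcc _ _ _ (by rw [len_over, len_under])]
  exact ⟨vle_over_under v w, vle_refl _⟩

lemma mem_dplus_le {v w x : List ℕ} (hx : x ∈ dplus v w) : vle x (under v w) := by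
  classical
  rw [dplus, treeIcc, Finset.mem_filter,
    mem_listIcc _ _ _ (by rw [len_over, len_under])] at hx
  exact hx.1.2

lemma under_eq_of_dplus_eq {v w v' w' : List ℕ} (hv : TreeName v) (hw : TreeName w)
    (hv' : TreeName v') (hw' : TreeName w') (h : dplus v w = dplus v' w') :
    under v w = under v' w' := by
  have h1 : vle (under v w) (under v' w') :=
    mem_dplus_le (h ▸ under_mem_dplus hv hw)
  have h2 : vle (under v' w') (under v w) :=
    mem_dplus_le (h ▸ under_mem_dplus hv' hw' : under v' w' ∈ dplus v w)
  exact vle_antisymm h1 h2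

/-- Left and right cancellation for the dendriform addition. -/
theorem stmt12 (u v w : List ℕ) (hu : TreeName u) (hv : TreeName v) (hw : TreeName w)
    (hlen : v.length = w.length) :
    (dplus u v = dplus u w → v = w) ∧ (dplus v u = dplus w u → v = w) := by
  constructor
  · intro h
    have := under_eq_of_dplus_eq hu hv hu hw h
    rw [under, under] at this
    have h2 := List.append_cancel_left this
    exact List.map_injective_iff.mpr (fun a b hab => by omega) h2
  · intro h
    have := under_eq_of_dplus_eq hv hu hw hu h
    rw [under, under, hlen] at this
    exact List.append_inj_left' this rfl
end
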